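/- arXiv:2605.28207 — 2 statements merged into one kernel-verified Lean document; each statement's English description precedes it below -/
import Mathlib

section
/- For every integer K ≥ 2 there exists a finite calibration space X of size 2K − 1 with the uniform distribution, real-valued expert output functions f_1, ..., f_{2K−1} on X, a deterministic top-1 router, and a positive regularization parameter λ, such that: (i) the activation-weighted-conditional-probability (ACP) scores satisfy I_1 = ... = I_K > I_{K+1} = ... = I_{2K−1} > 0, so the independent top-K selection is S_ind = {1,...,K}; (ii) the best linear reconstruction error of the MoE teacher output over S_ind equals (K−1)/(2K−1); and (iii) every size-K subset maximizing the regularized log-determinant objective S ↦ log det(𝒦_S + λ I), built from the importance-weighted kernel 𝒦_ij = √(I_i I_j) · E[f_i(x) f_j(x)], achieves zero linear reconstruction error. -/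
open Matrix Finset

/-- Principal submatrix of `K` indexed by a finite set `S`. -/
noncomputable def subK {n : ℕ} (K : Matrix (Fin n) (Fin n) ℝ) (S : Finset (Fin n)) :
    Matrix {x // x ∈ S} {x // x ∈ S} ℝ :=
  K.submatrix (fun i => i.1) (fun j => j.1)

namespace ACPaux

noncomputable def ff (k : ℕ) : Fin (2*k-1) → Fin (2*k-1) → ℝ := fun e x =>
  if (e:ℕ) < k then (if (x:ℕ) < k then 1 else 0) else (if x = e then 1 else 0)

noncomputable def lam0 (k : ℕ) : ℝ := Real.sqrt (1 / ((2*k-1 : ℕ):ℝ)) / ((2*k-1:ℕ):ℝ)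

noncomputable def Exp0 (k : ℕ) : (Fin (2*k-1) → ℝ) → ℝ := fun g => (∑ x, g x) / ((2*k-1:ℕ) : ℝ)

noncomputable def p0 (k : ℕ) : Fin (2*k-1) → Fin (2*k-1) → ℝ := fun x e => if id x = e then 1 else 0

noncomputable def FMoE0 (k : ℕ) : Fin (2*k-1) → ℝ := fun x => ∑ e, p0 k x e * ff k e x

noncomputable def CP0 (k : ℕ) : Fin (2*k-1) → ℝ := fun e =>
  (∑ x ∈ univ.filter fun x => id x = e, p0 k x e) /
    ((univ.filter fun x : Fin (2*k-1) => id x = e).card : ℝ)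

noncomputable def I0 (k : ℕ) : Fin (2*k-1) → ℝ := fun e =>
  CP0 k e * Real.sqrt (Exp0 k fun x => ff k e x ^ 2)

noncomputable def Kk0 (k : ℕ) : Matrix (Fin (2*k-1)) (Fin (2*k-1)) ℝ := fun i j =>
  Real.sqrt (I0 k i * I0 k j) * Exp0 k fun x => ff k i x * ff k j x

noncomputable def L0 (k : ℕ) : Finset (Fin (2*k-1)) → ℝ := fun S =>
  sInf {y : ℝ | ∃ a : Fin (2*k-1) → ℝ,
    y = Exp0 k fun x => (∑ e ∈ S, a e * ff k e x - FMoE0 k x) ^ 2}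

variable {k : ℕ}

lemma Ncast (hk : 2 ≤ k) : ((2*k-1:ℕ):ℝ) = 2*(k:ℝ)-1 := by
  have : (1:ℕ) ≤ 2*k := by omega
  push_cast [this]; ring

lemma Npos (hk : 2 ≤ k) : (0:ℝ) < ((2*k-1:ℕ):ℝ) := by
  have : 0 < 2*k-1 := by omega
  exact_mod_cast this

lemma lam0_pos (hk : 2 ≤ k) : 0 < lam0 k := by
  have h := Npos hk
  unfold lam0
  positivity

lemma card_gen (hk : 2 ≤ k) :
    ((univ.filter fun x : Fin (2*k-1) => (x:ℕ) < k)).card = k := by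
  rw [Finset.card_filter]
  rw [Fin.sum_univ_eq_sum_range (fun i => if i < k then 1 else 0)]
  rw [← Finset.card_filter]
  have : (Finset.range (2*k-1)).filter (fun i => i < k) = Finset.range k := by
    ext i; simp [Finset.mem_filter, Finset.mem_range]; omega
  rw [this, Finset.card_range]

lemma card_spec (hk : 2 ≤ k) :
    ((univ.filter fun x : Fin (2*k-1) => ¬ (x:ℕ) < k)).card = k - 1 := by
  rw [Finset.card_filter]
  rw [Fin.sum_univ_eq_sum_range (fun i => if ¬ i < k then 1 else 0)]
  rw [← Finset.card_filter]
  have : (Finset.range (2*k-1)).filter (fun i => ¬ i < k) = Finset.Ico k (2*k-1) := by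
    ext i; simp [Finset.mem_filter, Finset.mem_range, Finset.mem_Ico]; omega
  rw [this, Nat.card_Ico]
  omega

lemma FMoE_eq (hk : 2 ≤ k) (x : Fin (2*k-1)) : FMoE0 k x = 1 := by
  unfold FMoE0 p0
  rw [Finset.sum_eq_single x]
  · simp [ff]
  · intro e _ he
    simp [Ne.symm he]
  · simp

lemma CP_eq (hk : 2 ≤ k) (e : Fin (2*k-1)) : CP0 k e = 1 := by
  unfold CP0 p0
  have h : (univ.filter fun x : Fin (2*k-1) => id x = e) = {e} := by
    ext y; simp
  rw [h]
  simp

lemma exp_sq (hk : 2 ≤ k) (e : Fin (2*k-1)) :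
    Exp0 k (fun x => ff k e x ^ 2) =
      if (e:ℕ) < k then (k:ℝ)/((2*k-1:ℕ):ℝ) else 1/((2*k-1:ℕ):ℝ) := by
  unfold Exp0 ff
  by_cases he : (e:ℕ) < k
  · simp only [he, if_true]
    have : ∀ x : Fin (2*k-1), ((if (x:ℕ) < k then (1:ℝ) else 0)) ^ 2
        = (if (x:ℕ) < k then (1:ℝ) else 0) := by
      intro x; split <;> norm_num
    rw [Finset.sum_congr rfl (fun x _ => this x)]
    rw [Finset.sum_boole, card_gen hk]
  · simp only [he, if_false]
    have : ∀ x : Fin (2*k-1), ((if x = e then (1:ℝ) else 0)) ^ 2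
        = (if x = e then (1:ℝ) else 0) := by
      intro x; split <;> norm_num
    rw [Finset.sum_congr rfl (fun x _ => this x)]
    simp

lemma I_eq (hk : 2 ≤ k) (e : Fin (2*k-1)) :
    I0 k e = if (e:ℕ) < k then Real.sqrt ((k:ℝ)/((2*k-1:ℕ):ℝ))
      else Real.sqrt (1/((2*k-1:ℕ):ℝ)) := by
  unfold I0
  rw [CP_eq hk, one_mul, exp_sq hk]
  split <;> rfl

lemma sqrt_one_div_pos (hk : 2 ≤ k) : 0 < Real.sqrt (1/((2*k-1:ℕ):ℝ)) := by
  have := Npos (k := k) hk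
  positivity

lemma I_lt (hk : 2 ≤ k) :
    Real.sqrt (1/((2*k-1:ℕ):ℝ)) < Real.sqrt ((k:ℝ)/((2*k-1:ℕ):ℝ)) := by
  have hN := Npos (k := k) hk
  apply Real.sqrt_lt_sqrt (by positivity)
  have hk' : (1:ℝ) < (k:ℝ) := by exact_mod_cast by omega
  exact div_lt_div_of_pos_right hk' hN

lemma Kk_apply (hk : 2 ≤ k) (i j : Fin (2*k-1)) :
    Kk0 k i j = if (i:ℕ) < k ∧ (j:ℕ) < k then
        Real.sqrt ((k:ℝ)/((2*k-1:ℕ):ℝ)) * ((k:ℝ)/((2*k-1:ℕ):ℝ))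
      else if i = j then lam0 k else 0 := by
  have hN := Npos (k := k) hk
  unfold Kk0
  by_cases hi : (i:ℕ) < k <;> by_cases hj : (j:ℕ) < k
  · simp only [hi, hj, and_self, if_true]
    rw [I_eq hk, I_eq hk, if_pos hi, if_pos hj,
      Real.sqrt_mul_self (Real.sqrt_nonneg _)]
    congr 1
    unfold Exp0 ff
    simp only [hi, hj, if_true]
    have : ∀ x : Fin (2*k-1), ((if (x:ℕ) < k then (1:ℝ) else 0)) *
        ((if (x:ℕ) < k then (1:ℝ) else 0)) = (if (x:ℕ) < k then (1:ℝ) else 0) := by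
      intro x; split <;> norm_num
    rw [Finset.sum_congr rfl (fun x _ => this x), Finset.sum_boole, card_gen hk]
  · have hij : i ≠ j := by
      intro h; rw [h] at hi; exact hj hi
    simp only [hi, hj, and_false, if_false, hij]
    have : (Exp0 k fun x => ff k i x * ff k j x) = 0 := by
      unfold Exp0 ff
      simp only [hi, hj, if_true, if_false]
      rw [Finset.sum_eq_zero, zero_div]
      intro x _
      by_cases hx : (x:ℕ) < k
      · have : x ≠ j := by intro h; rw [h] at hx; exact hj hx
        simp [hx, this]
      · simp [hx]
    rw [this, mul_zero]
  · have hij : i ≠ j := by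
      intro h; rw [h] at hi; exact hi hj
    simp only [hi, hj, false_and, if_false, hij]
    have : (Exp0 k fun x => ff k i x * ff k j x) = 0 := by
      unfold Exp0 ff
      simp only [hi, hj, if_true, if_false]
      rw [Finset.sum_eq_zero, zero_div]
      intro x _
      by_cases hx : (x:ℕ) < k
      · have : x ≠ i := by intro h; rw [h] at hx; exact hi hx
        simp [hx, this]
      · simp [hx]
    rw [this, mul_zero]
  · simp only [hi, hj, false_and, if_false]
    by_cases hij : i = j
    · subst hij
      simp only [if_pos rfl]
      rw [I_eq hk, if_neg hi, Real.sqrt_mul_self (Real.sqrt_nonneg _)]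
      have : (Exp0 k fun x => ff k i x * ff k i x) = 1/((2*k-1:ℕ):ℝ) := by
        unfold Exp0 ff
        simp only [hi, if_false]
        have : ∀ x : Fin (2*k-1), ((if x = i then (1:ℝ) else 0)) *
            ((if x = i then (1:ℝ) else 0)) = (if x = i then (1:ℝ) else 0) := by
          intro x; split <;> norm_num
        rw [Finset.sum_congr rfl (fun x _ => this x)]
        simp
      rw [this]
      unfold lam0
      rw [mul_one_div, if_pos trivial]
    · simp only [hij, if_false]
      have : (Exp0 k fun x => ff k i x * ff k j x) = 0 := by
        unfold Exp0 ff
        simp only [hi, hj, if_false]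
        rw [Finset.sum_eq_zero, zero_div]
        intro x _
        by_cases hx : x = i
        · have hxj : x ≠ j := by rw [hx]; exact hij
          simp [hxj]
        · simp [hx]
      rw [this, mul_zero]

lemma halpha (hk : 2 ≤ k) :
    Real.sqrt ((k:ℝ)/((2*k-1:ℕ):ℝ)) * ((k:ℝ)/((2*k-1:ℕ):ℝ))
      = ((k:ℝ) * Real.sqrt (k:ℝ)) * lam0 k := by
  have hN := Npos (k := k) hk
  have h1 : ((k:ℝ)/((2*k-1:ℕ):ℝ)) = (k:ℝ) * (1/((2*k-1:ℕ):ℝ)) := by ring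
  rw [h1, Real.sqrt_mul (by positivity)]
  unfold lam0
  field_simp

lemma det_eq (hk : 2 ≤ k) (T : Finset (Fin (2*k-1))) (hT : T.card = k)
    {m : ℕ} (hm : (T.filter fun e : Fin (2*k-1) => (e:ℕ) < k).card = m) :
    (subK (Kk0 k) T + lam0 k • 1).det
      = lam0 k ^ m * (2*lam0 k) ^ (k-m) * (1 + (m:ℝ) * ((k:ℝ) * Real.sqrt (k:ℝ))) := by
  classical
  set lam := lam0 k with hlam
  set c : ℝ := (k:ℝ) * Real.sqrt (k:ℝ) with hc
  set d : {x // x ∈ T} → ℝ := fun i => if ((i : Fin (2*k-1)):ℕ) < k then lam else 2*lam with hd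
  set w : {x // x ∈ T} → ℝ := fun i => if ((i : Fin (2*k-1)):ℕ) < k then (1:ℝ) else 0 with hw
  have key : subK (Kk0 k) T + lam • 1
      = Matrix.diagonal d * (1 + Matrix.replicateCol Unit (c • w) * Matrix.replicateRow Unit w) := by
    ext i j
    rw [Matrix.diagonal_mul]
    have hcr : (Matrix.replicateCol Unit (c • w) * Matrix.replicateRow Unit w) i j = c * w i * w j := by
      simp [Matrix.mul_apply, Matrix.replicateCol_apply, Matrix.replicateRow_apply, mul_comm, mul_assoc]
    rw [Matrix.add_apply, Matrix.add_apply, hcr, Matrix.smul_apply, Matrix.one_apply]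
    have hsub : subK (Kk0 k) T i j = Kk0 k i.1 j.1 := rfl
    rw [hsub, Kk_apply hk]
    by_cases h : i = j
    · subst h
      simp only [if_pos rfl]
      by_cases hi : ((i:Fin (2*k-1)):ℕ) < k
      · simp only [hd, hw, hi, if_true, and_self, smul_eq_mul]
        rw [halpha hk]
        ring
      · simp only [hd, hw, hi, if_false, and_self, smul_eq_mul, if_true, ← hlam]
        ring
    · have h1 : (i : Fin (2*k-1)) ≠ (j : Fin (2*k-1)) := fun hh => h (Subtype.ext hh)
      simp only [if_neg h, if_neg h1, smul_eq_mul, mul_zero, add_zero, zero_add]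
      by_cases hi : ((i:Fin (2*k-1)):ℕ) < k <;>
        by_cases hj : ((j:Fin (2*k-1)):ℕ) < k
      · simp only [hd, hw, hi, hj, if_true, and_self]
        rw [halpha hk]
        ring
      · simp only [hd, hw, hi, hj, if_true, if_false, and_false]
        ring
      · simp only [hd, hw, hi, hj, if_true, if_false, false_and]
        ring
      · simp only [hd, hw, hi, hj, if_false, and_self]
        ring
  rw [key, Matrix.det_mul, Matrix.det_diagonal, Matrix.det_one_add_replicateCol_mul_replicateRow]
  have h1 : w ⬝ᵥ (c • w) = (m:ℝ) * c := by
    unfold dotProduct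
    have : ∀ i : {x // x ∈ T}, w i * (c • w) i
        = (if ((i : Fin (2*k-1)):ℕ) < k then c else 0) := by
      intro i
      simp only [hw, Pi.smul_apply, smul_eq_mul]
      split <;> ring
    rw [Finset.sum_congr rfl (fun i _ => this i)]
    rw [Finset.sum_coe_sort T (fun x => if (x:ℕ) < k then c else 0)]
    rw [Finset.sum_ite, Finset.sum_const, Finset.sum_const, hm]
    simp [nsmul_eq_mul, mul_comm]
  have h2 : ∏ i : {x // x ∈ T}, d i = lam^m * (2*lam)^(k-m) := by
    rw [show (fun i : {x // x ∈ T} => d i) = fun i => d i from rfl]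
    rw [Finset.prod_coe_sort T (fun x => if (x:ℕ) < k then lam else 2*lam)]
    rw [Finset.prod_ite, Finset.prod_const, Finset.prod_const, hm]
    congr 2
    have := Finset.card_filter_add_card_filter_not
      (s := T) (p := fun e : Fin (2*k-1) => (e:ℕ) < k)
    omega
  rw [h1, h2]

lemma part2 (hk : 2 ≤ k) :
    L0 k (univ.filter fun e : Fin (2*k-1) => (e:ℕ) < k)
      = ((k:ℝ) - 1) / (2 * (k:ℝ) - 1) := by
  classical
  have hN := Npos (k := k) hk
  have hNc := Ncast (k := k) hk
  set Sind := univ.filter fun e : Fin (2*k-1) => (e:ℕ) < k with hSind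
  set z : Fin (2*k-1) := ⟨0, by omega⟩ with hz
  set a0 : Fin (2*k-1) → ℝ := fun e => if e = z then 1 else 0 with ha0
  have hzS : z ∈ Sind := by
    simp [hSind, hz]
    omega
  have hinner : ∀ x : Fin (2*k-1),
      (∑ e ∈ Sind, a0 e * ff k e x) = if (x:ℕ) < k then 1 else 0 := by
    intro x
    by_cases hx : (x:ℕ) < k
    · rw [if_pos hx]
      have : ∀ e ∈ Sind, a0 e * ff k e x = (if e = z then (1:ℝ) else 0) := by
        intro e he
        have hek : (e:ℕ) < k := by simpa [hSind] using he
        rw [ha0]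
        unfold ff
        simp [hek, hx]
      rw [Finset.sum_congr rfl this, Finset.sum_ite_eq' Sind z, if_pos hzS]
    · rw [if_neg hx]
      apply Finset.sum_eq_zero
      intro e he
      have hek : (e:ℕ) < k := by simpa [hSind] using he
      unfold ff
      simp [hek, hx]
  have hval : ∀ x : Fin (2*k-1),
      ((∑ e ∈ Sind, a0 e * ff k e x) - FMoE0 k x) ^ 2
        = if (x:ℕ) < k then 0 else 1 := by
    intro x
    rw [hinner x, FMoE_eq hk]
    split <;> norm_num
  have hsum : (∑ x : Fin (2*k-1), if (x:ℕ) < k then (0:ℝ) else 1) = (k:ℝ) - 1 := by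
    have : ∀ x : Fin (2*k-1), (if (x:ℕ) < k then (0:ℝ) else 1)
        = (if ¬ (x:ℕ) < k then (1:ℝ) else 0) := by
      intro x; split <;> simp_all
    rw [Finset.sum_congr rfl (fun x _ => this x), Finset.sum_boole, card_spec hk]
    have : (1:ℕ) ≤ k := by omega
    push_cast [this]
    ring
  have hmem : ((k:ℝ) - 1) / (2*(k:ℝ) - 1) ∈
      {y : ℝ | ∃ a : Fin (2*k-1) → ℝ,
        y = Exp0 k fun x => (∑ e ∈ Sind, a e * ff k e x - FMoE0 k x) ^ 2} := by
    refine ⟨a0, ?_⟩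
    unfold Exp0
    rw [Finset.sum_congr rfl (fun x _ => hval x), hsum, hNc]
  have hlb : ∀ y ∈ {y : ℝ | ∃ a : Fin (2*k-1) → ℝ,
      y = Exp0 k fun x => (∑ e ∈ Sind, a e * ff k e x - FMoE0 k x) ^ 2},
      ((k:ℝ) - 1) / (2*(k:ℝ) - 1) ≤ y := by
    rintro y ⟨a, rfl⟩
    unfold Exp0
    rw [← hNc]
    have hterm : ∀ x ∈ univ.filter (fun x : Fin (2*k-1) => ¬ (x:ℕ) < k),
        (1:ℝ) ≤ (∑ e ∈ Sind, a e * ff k e x - FMoE0 k x)^2 := by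
      intro x hx
      have hx' : ¬ (x:ℕ) < k := by simpa using hx
      have h0 : (∑ e ∈ Sind, a e * ff k e x) = 0 := by
        apply Finset.sum_eq_zero
        intro e he
        have hek : (e:ℕ) < k := by simpa [hSind] using he
        unfold ff
        simp [hek, hx']
      rw [h0, FMoE_eq hk]
      norm_num
    have hge : ((k:ℝ) - 1) ≤ ∑ x, (∑ e ∈ Sind, a e * ff k e x - FMoE0 k x)^2 := by
      have h1 : ((k:ℝ)-1)
          = ∑ _x ∈ univ.filter (fun x : Fin (2*k-1) => ¬(x:ℕ)<k), (1:ℝ) := by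
        rw [Finset.sum_const, card_spec hk, nsmul_eq_mul, mul_one]
        have : (1:ℕ) ≤ k := by omega
        push_cast [this]
        ring
      rw [h1]
      refine le_trans (Finset.sum_le_sum hterm)
        (Finset.sum_le_sum_of_subset_of_nonneg (Finset.filter_subset _ _) ?_)
      intro x _ _
      positivity
    gcongr
  unfold L0
  exact le_antisymm (csInf_le ⟨_, hlb⟩ hmem) (le_csInf ⟨_, hmem⟩ hlb)

lemma part3 (hk : 2 ≤ k) (S : Finset (Fin (2*k-1))) (hS : S.card = k)
    (hmax : ∀ T : Finset (Fin (2*k-1)), T.card = k →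
      Real.log (subK (Kk0 k) T + lam0 k • 1).det
        ≤ Real.log (subK (Kk0 k) S + lam0 k • 1).det) :
    L0 k S = 0 := by
  classical
  have hN := Npos (k := k) hk
  have hlam := lam0_pos (k := k) hk
  have hc : (0:ℝ) < (k:ℝ) * Real.sqrt (k:ℝ) := by
    have : (0:ℝ) < (k:ℝ) := by exact_mod_cast by omega
    positivity
  set c : ℝ := (k:ℝ) * Real.sqrt (k:ℝ) with hcdef
  -- Step A: S contains all specialists
  have hspec : ∀ e : Fin (2*k-1), k ≤ (e:ℕ) → e ∈ S := by
    by_contra hcon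
    push_neg at hcon
    obtain ⟨s, hs1, hs2⟩ := hcon
    set m := (S.filter fun e : Fin (2*k-1) => (e:ℕ) < k).card with hm
    have hsplitS := Finset.card_filter_add_card_filter_not
      (s := S) (p := fun e : Fin (2*k-1) => (e:ℕ) < k)
    have hsub : (S.filter fun e : Fin (2*k-1) => ¬ (e:ℕ) < k)
        ⊆ (univ.filter fun e : Fin (2*k-1) => ¬ (e:ℕ) < k).erase s := by
      intro e he
      rw [Finset.mem_erase]
      rw [Finset.mem_filter] at he
      refine ⟨?_, by
        simp only [Finset.mem_filter, Finset.mem_univ, true_and]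
        exact he.2⟩
      intro h
      exact hs2 (h ▸ he.1)
    have hcard_sub := Finset.card_le_card hsub
    rw [Finset.card_erase_of_mem (by simp; omega), card_spec hk] at hcard_sub
    have hm2 : 2 ≤ m := by omega
    have hmk : m ≤ k := by omega
    obtain ⟨g, hg⟩ : (S.filter fun e : Fin (2*k-1) => (e:ℕ) < k).Nonempty := by
      rw [← Finset.card_pos, ← hm]; omega
    have hgS : g ∈ S := (Finset.mem_filter.mp hg).1
    have hgk : (g:ℕ) < k := (Finset.mem_filter.mp hg).2
    set S' := insert s (S.erase g) with hS'def
    have hs_not : s ∉ S.erase g := fun h => hs2 (Finset.mem_of_mem_erase h)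
    have hS' : S'.card = k := by
      rw [hS'def, Finset.card_insert_of_notMem hs_not, Finset.card_erase_of_mem hgS, hS]
      omega
    have hfilter' : S'.filter (fun e : Fin (2*k-1) => (e:ℕ) < k)
        = (S.filter fun e : Fin (2*k-1) => (e:ℕ) < k).erase g := by
      ext e
      simp only [hS'def, Finset.mem_filter, Finset.mem_insert, Finset.mem_erase]
      constructor
      · rintro ⟨(rfl | ⟨heg, heS⟩), hek⟩
        · omega
        · exact ⟨heg, heS, hek⟩
      · rintro ⟨heg, heS, hek⟩
        exact ⟨Or.inr ⟨heg, heS⟩, hek⟩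
    have hm' : (S'.filter fun e : Fin (2*k-1) => (e:ℕ) < k).card = m - 1 := by
      rw [hfilter', Finset.card_erase_of_mem hg, ← hm]
    have h1 := det_eq hk S hS hm.symm
    have h2 := det_eq hk S' hS' hm'
    have hpow1 : lam0 k ^ m = lam0 k ^ (m-1) * lam0 k := by
      rw [← pow_succ]
      congr 1
      omega
    have hpow2 : (2*lam0 k) ^ (k-(m-1)) = (2*lam0 k) ^ (k-m) * (2*lam0 k) := by
      rw [← pow_succ]
      congr 1
      omega
    have hm1c : ((m-1:ℕ):ℝ) = (m:ℝ) - 1 := by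
      have : (1:ℕ) ≤ m := by omega
      push_cast [this]
      ring
    have hP : (0:ℝ) < lam0 k ^ (m-1) * (2*lam0 k) ^ (k-m) := by positivity
    have hmR : (2:ℝ) ≤ (m:ℝ) := by exact_mod_cast hm2
    have hlt : (subK (Kk0 k) S + lam0 k • 1).det < (subK (Kk0 k) S' + lam0 k • 1).det := by
      rw [h1, h2, hpow1, hpow2, hm1c, ← hcdef]
      nlinarith [hP, hlam, hc, hmR, mul_pos hP hlam, mul_pos (mul_pos hP hlam) hc]
    have hposS : (0:ℝ) < (subK (Kk0 k) S + lam0 k • 1).det := by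
      rw [h1]
      have : (0:ℝ) ≤ (m:ℝ) := by positivity
      have h1mc : (0:ℝ) < 1 + (m:ℝ) * c := by nlinarith
      positivity
    have := Real.log_lt_log hposS hlt
    have := hmax S' hS'
    linarith
  -- Step B: L S = 0
  have hSfilter : S.filter (fun e : Fin (2*k-1) => ¬ (e:ℕ) < k)
      = univ.filter (fun e : Fin (2*k-1) => ¬ (e:ℕ) < k) := by
    ext e
    simp only [Finset.mem_filter, Finset.mem_univ, true_and]
    exact ⟨fun h => h.2, fun h => ⟨hspec e (by omega), h⟩⟩
  have hgen1 : (S.filter fun e : Fin (2*k-1) => (e:ℕ) < k).card = 1 := by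
    have hsplitS := Finset.card_filter_add_card_filter_not
      (s := S) (p := fun e : Fin (2*k-1) => (e:ℕ) < k)
    rw [hSfilter, card_spec hk, hS] at hsplitS
    omega
  have hx_sum : ∀ x : Fin (2*k-1), (∑ e ∈ S, (1:ℝ) * ff k e x) = 1 := by
    intro x
    by_cases hx : (x:ℕ) < k
    · have : ∀ e ∈ S, (1:ℝ) * ff k e x = (if (e:ℕ) < k then (1:ℝ) else 0) := by
        intro e _
        rw [one_mul]
        unfold ff
        by_cases hek : (e:ℕ) < k
        · simp [hek, hx]
        · have : x ≠ e := by intro h; rw [h] at hx; omega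
          simp [hek, this]
      rw [Finset.sum_congr rfl this, Finset.sum_boole, hgen1]
      norm_num
    · have : ∀ e ∈ S, (1:ℝ) * ff k e x = (if x = e then (1:ℝ) else 0) := by
        intro e _
        rw [one_mul]
        unfold ff
        by_cases hek : (e:ℕ) < k
        · have : x ≠ e := by intro h; rw [h] at hx; omega
          simp [hek, hx, this]
        · simp [hek]
      rw [Finset.sum_congr rfl this, Finset.sum_ite_eq S x, if_pos (hspec x (by omega))]
  have hmem : (0:ℝ) ∈ {y : ℝ | ∃ a : Fin (2*k-1) → ℝ,
      y = Exp0 k fun x => (∑ e ∈ S, a e * ff k e x - FMoE0 k x) ^ 2} := by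
    refine ⟨fun _ => 1, ?_⟩
    unfold Exp0
    rw [Finset.sum_eq_zero, zero_div]
    intro x _
    rw [hx_sum x, FMoE_eq hk]
    norm_num
  have hlb : ∀ y ∈ {y : ℝ | ∃ a : Fin (2*k-1) → ℝ,
      y = Exp0 k fun x => (∑ e ∈ S, a e * ff k e x - FMoE0 k x) ^ 2}, (0:ℝ) ≤ y := by
    rintro y ⟨a, rfl⟩
    unfold Exp0
    positivity
  unfold L0
  exact le_antisymm (csInf_le ⟨0, hlb⟩ hmem) (le_csInf ⟨0, hmem⟩ hlb)

lemma part1a (hk : 2 ≤ k) : ∀ i j : Fin (2*k-1), (i:ℕ) < k → (j:ℕ) < k → I0 k i = I0 k j := by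
  intro i j hi hj
  rw [I_eq hk, I_eq hk, if_pos hi, if_pos hj]

lemma part1b (hk : 2 ≤ k) : ∀ i j : Fin (2*k-1), k ≤ (i:ℕ) → k ≤ (j:ℕ) → I0 k i = I0 k j := by
  intro i j hi hj
  rw [I_eq hk, I_eq hk, if_neg (by omega), if_neg (by omega)]

lemma part1c (hk : 2 ≤ k) : ∀ i j : Fin (2*k-1), (i:ℕ) < k → k ≤ (j:ℕ) → I0 k j < I0 k i := by
  intro i j hi hj
  rw [I_eq hk, I_eq hk, if_pos hi, if_neg (by omega)]
  exact I_lt hk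

lemma part1d (hk : 2 ≤ k) : ∀ j : Fin (2*k-1), k ≤ (j:ℕ) → 0 < I0 k j := by
  intro j hj
  rw [I_eq hk, if_neg (by omega)]
  exact sqrt_one_div_pos hk

end ACPaux

/-- **redundancy counterexample.**  For every integer `K ≥ 2` there exist a
calibration space of size `2K − 1` (here `Fin (2K − 1)` with the uniform distribution),
real-valued expert output functions `f_1, …, f_{2K−1}`, a deterministic top-1 router `r`,
and a positive regularization parameter `λ`, such that, with
`I_e = CP_e · √(E[f_e²])` the ACP scores, `F_MoE(x) = Σ_e p^{(e)}(x) f_e(x)` the teacher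
output, `𝒦_ij = √(I_i I_j)·E[f_i f_j]` the importance-weighted kernel, and
`L(S) = inf_a E[(Σ_{e∈S} a_e f_e(x) − F_MoE(x))²]` the best linear reconstruction error:
(i) `I_1 = ⋯ = I_K > I_{K+1} = ⋯ = I_{2K−1} > 0` (so the independent top-`K` selection is
`S_ind = {1,…,K}`, the first block);
(ii) `L(S_ind) = (K−1)/(2K−1)`;
(iii) every size-`K` subset maximizing `S ↦ log det(𝒦_S + λI)` achieves `L(S) = 0`. -/
theorem acp_redundancy_counterexample (k : ℕ) (hk : 2 ≤ k) :
    ∃ (f : Fin (2 * k - 1) → Fin (2 * k - 1) → ℝ)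
      (r : Fin (2 * k - 1) → Fin (2 * k - 1)) (lam : ℝ),
      0 < lam ∧
        (let n : ℕ := 2 * k - 1
        let Exp : (Fin n → ℝ) → ℝ := fun g => (∑ x, g x) / (n : ℝ)
        let p : Fin n → Fin n → ℝ := fun x e => if r x = e then 1 else 0
        let FMoE : Fin n → ℝ := fun x => ∑ e, p x e * f e x
        let CP : Fin n → ℝ := fun e =>
          (∑ x ∈ univ.filter fun x => r x = e, p x e) /
            ((univ.filter fun x => r x = e).card : ℝ)
        let I : Fin n → ℝ := fun e => CP e * Real.sqrt (Exp fun x => f e x ^ 2)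
        let Kk : Matrix (Fin n) (Fin n) ℝ := fun i j =>
          Real.sqrt (I i * I j) * Exp fun x => f i x * f j x
        let L : Finset (Fin n) → ℝ := fun S =>
          sInf {y : ℝ | ∃ a : Fin n → ℝ,
            y = Exp fun x => (∑ e ∈ S, a e * f e x - FMoE x) ^ 2}
        ((∀ i j : Fin n, (i : ℕ) < k → (j : ℕ) < k → I i = I j) ∧
            (∀ i j : Fin n, k ≤ (i : ℕ) → k ≤ (j : ℕ) → I i = I j) ∧
            (∀ i j : Fin n, (i : ℕ) < k → k ≤ (j : ℕ) → I j < I i) ∧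
            (∀ j : Fin n, k ≤ (j : ℕ) → 0 < I j)) ∧
          L (univ.filter fun e : Fin n => (e : ℕ) < k) =
              ((k : ℝ) - 1) / (2 * (k : ℝ) - 1) ∧
          (∀ S : Finset (Fin n), S.card = k →
            (∀ T : Finset (Fin n), T.card = k →
              Real.log (subK Kk T + lam • 1).det ≤ Real.log (subK Kk S + lam • 1).det) →
            L S = 0)) := by
  exact ⟨ACPaux.ff k, id, ACPaux.lam0 k, ACPaux.lam0_pos hk,
    ⟨ACPaux.part1a hk, ACPaux.part1b hk, ACPaux.part1c hk, ACPaux.part1d hk⟩,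
    ACPaux.part2 hk, ACPaux.part3 hk⟩
end

section
/- In the redundancy construction with K ≥ 2 identical indicator experts on K points of a uniform (2K−1)-point space and K−1 orthogonal specialist experts, with α = (K/(2K−1))^{3/2}, β = (1/(2K−1))^{3/2}, and λ = β: for any size-K subset S containing exactly t experts from the identical block (1 ≤ t ≤ K), the determinant det(𝒦_S + λ I) equals D(t) = β^{K−1} · 2^{K−t} · (β + tα), and D(t) is strictly decreasing in t on {1,...,K}; consequently every size-K maximizer of log det(𝒦_S + λ I) contains exactly one expert from the identical block together with all K−1 specialists. -/
open Matrix Finset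

/-- Expert outputs of the redundancy construction on `X = Fin (2k − 1)`:
experts `e < k` are identical indicators of the first `k` points (`a_1, …, a_K`),
experts `e ≥ k` are the pairwise orthogonal specialists `1{x = b_j}`. -/
noncomputable def redExpert (k : ℕ) (e x : Fin (2 * k - 1)) : ℝ :=
  if (e : ℕ) < k then (if (x : ℕ) < k then 1 else 0)
  else (if (x : ℕ) = (e : ℕ) then 1 else 0)

/-- Expectation under the uniform distribution on `Fin (2k − 1)`. -/
noncomputable def redExp (k : ℕ) (g : Fin (2 * k - 1) → ℝ) : ℝ :=
  (∑ x, g x) / ((2 * k - 1 : ℕ) : ℝ)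

/-- ACP importance of expert `e` in the redundancy construction (deterministic router,
so `I_e = √(E[f_e²])`). -/
noncomputable def redImp (k : ℕ) (e : Fin (2 * k - 1)) : ℝ :=
  Real.sqrt (redExp k fun x => redExpert k e x ^ 2)

/-- The importance-weighted kernel `𝒦_ij = √(I_i I_j) · E[f_i f_j]`. -/
noncomputable def redKer (k : ℕ) : Matrix (Fin (2 * k - 1)) (Fin (2 * k - 1)) ℝ :=
  fun i j => Real.sqrt (redImp k i * redImp k j) * redExp k fun x => redExpert k i x * redExpert k j x

/-- `α = (K/(2K−1))^{3/2}`. -/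
noncomputable def redAlpha (k : ℕ) : ℝ := ((k : ℝ) / (2 * (k : ℝ) - 1)) ^ ((3 : ℝ) / 2)

/-- `β = (1/(2K−1))^{3/2}`. -/
noncomputable def redBeta (k : ℕ) : ℝ := ((1 : ℝ) / (2 * (k : ℝ) - 1)) ^ ((3 : ℝ) / 2)

/-- `D(t) = β^{K−1} · 2^{K−t} · (β + tα)`. -/
noncomputable def redD (k t : ℕ) : ℝ :=
  redBeta k ^ (k - 1) * (2 : ℝ) ^ (k - t) * (redBeta k + (t : ℝ) * redAlpha k)


lemma det_diag_add_cmr {n : Type*} [DecidableEq n] [Fintype n]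
    (d u : n → ℝ) (hd : ∀ i, d i ≠ 0) :
    (Matrix.diagonal d + Matrix.replicateCol Unit u * Matrix.replicateRow Unit u).det
      = (∏ i, d i) * (1 + ∑ i, u i ^ 2 / d i) := by
  have key : Matrix.diagonal d + Matrix.replicateCol Unit u * Matrix.replicateRow Unit u
      = Matrix.diagonal d * (1 + Matrix.replicateCol Unit (fun i => u i / d i) * Matrix.replicateRow Unit u) := by
    rw [Matrix.mul_add, Matrix.mul_one]
    congr 1
    ext i j
    simp [Matrix.mul_apply, Matrix.diagonal, Matrix.replicateCol, Matrix.replicateRow]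
    field_simp
    exact (mul_div_cancel_right₀ _ (hd i)).symm
  rw [key, Matrix.det_mul, Matrix.det_diagonal, Matrix.det_one_add_replicateCol_mul_replicateRow]
  congr 2
  simp [dotProduct]
  congr 1
  ext i
  field_simp

section facts
variable {k : ℕ} (hk : 2 ≤ k)

lemma castN (hk : 2 ≤ k) : ((2 * k - 1 : ℕ) : ℝ) = 2 * (k : ℝ) - 1 := by
  have : 1 ≤ 2 * k := by omega
  push_cast [Nat.cast_sub this]
  ring

lemma Npos (hk : 2 ≤ k) : (0 : ℝ) < 2 * (k : ℝ) - 1 := by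
  have : (2 : ℝ) ≤ (k : ℝ) := by exact_mod_cast hk
  linarith

lemma rpow32 {x : ℝ} (hx : 0 < x) : x ^ ((3:ℝ)/2) = Real.sqrt x * x := by
  have : (3:ℝ)/2 = 1/2 + 1 := by norm_num
  rw [this, Real.rpow_add hx, Real.rpow_one, Real.sqrt_eq_rpow]

lemma sum_ind_lt (hk : 2 ≤ k) :
    ∑ x : Fin (2 * k - 1), (if (x : ℕ) < k then (1:ℝ) else 0) = k := by
  rw [Fin.sum_univ_eq_sum_range (fun i => if i < k then (1:ℝ) else 0) (2*k-1)]
  have hkN : k ≤ 2 * k - 1 := by omega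
  rw [← Finset.sum_range_add_sum_Ico _ hkN]
  have h1 : ∑ i ∈ Finset.range k, (if i < k then (1:ℝ) else 0) = k := by
    rw [Finset.sum_congr rfl (fun i hi => if_pos (Finset.mem_range.mp hi))]
    simp
  have h2 : ∑ i ∈ Finset.Ico k (2*k-1), (if i < k then (1:ℝ) else 0) = 0 := by
    rw [Finset.sum_congr rfl (fun i hi => if_neg (by have := (Finset.mem_Ico.mp hi).1; omega))]
    simp
  rw [h1, h2, add_zero]

lemma sum_ind_eq (e : Fin (2 * k - 1)) :
    ∑ x : Fin (2 * k - 1), (if (x : ℕ) = (e : ℕ) then (1:ℝ) else 0) = 1 := by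
  simp [Fin.val_eq_val]

lemma redImp_lt (hk : 2 ≤ k) {e : Fin (2 * k - 1)} (he : (e : ℕ) < k) :
    redImp k e = Real.sqrt ((k : ℝ) / (2 * (k : ℝ) - 1)) := by
  unfold redImp redExp redExpert
  simp only [he, if_true]
  rw [castN hk]
  have h : ∀ x : Fin (2*k-1), (if (x:ℕ) < k then (1:ℝ) else 0)^2
      = if (x:ℕ) < k then 1 else 0 := fun x => by split <;> norm_num
  simp only [h]
  rw [sum_ind_lt hk]

lemma redImp_ge (hk : 2 ≤ k) {e : Fin (2 * k - 1)} (he : ¬ (e : ℕ) < k) :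
    redImp k e = Real.sqrt ((1 : ℝ) / (2 * (k : ℝ) - 1)) := by
  unfold redImp redExp redExpert
  simp only [he, if_false]
  rw [castN hk]
  have h : ∀ x : Fin (2*k-1), (if (x:ℕ) = (e:ℕ) then (1:ℝ) else 0)^2
      = if (x:ℕ) = (e:ℕ) then 1 else 0 := fun x => by split <;> norm_num
  simp only [h]
  rw [sum_ind_eq e]

lemma redKer_apply (hk : 2 ≤ k) (i j : Fin (2 * k - 1)) :
    redKer k i j = if (i : ℕ) < k ∧ (j : ℕ) < k then redAlpha k
      else if i = j then redBeta k else 0 := by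
  have hNpos := Npos hk
  have hkR : (0:ℝ) < (k:ℝ) := by exact_mod_cast (by omega : 0 < k)
  have hcpos : (0:ℝ) < (k:ℝ)/(2*(k:ℝ)-1) := by positivity
  have hbpos : (0:ℝ) < (1:ℝ)/(2*(k:ℝ)-1) := by positivity
  unfold redKer
  by_cases hi : (i:ℕ) < k
  · by_cases hj : (j:ℕ) < k
    · rw [if_pos ⟨hi, hj⟩]
      rw [redImp_lt hk hi, redImp_lt hk hj, Real.mul_self_sqrt hcpos.le]
      have hsum : redExp k (fun x => redExpert k i x * redExpert k j x)
          = (k:ℝ)/(2*(k:ℝ)-1) := by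
        unfold redExp redExpert
        simp only [hi, hj, if_true]
        rw [castN hk]
        have h : ∀ x : Fin (2*k-1), (if (x:ℕ) < k then (1:ℝ) else 0) *
            (if (x:ℕ) < k then (1:ℝ) else 0) = if (x:ℕ) < k then 1 else 0 :=
          fun x => by split <;> norm_num
        simp only [h]
        rw [sum_ind_lt hk]
      rw [hsum, redAlpha, rpow32 hcpos]
    · have hij : i ≠ j := by
        intro h; rw [h] at hi; exact hj hi
      rw [if_neg (by tauto), if_neg hij]
      have hsum : redExp k (fun x => redExpert k i x * redExpert k j x) = 0 := by
        unfold redExp redExpert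
        simp only [hi, hj, if_true, if_false]
        have h : ∀ x : Fin (2*k-1), (if (x:ℕ) < k then (1:ℝ) else 0) *
            (if (x:ℕ) = (j:ℕ) then (1:ℝ) else 0) = 0 := fun x => by
          by_cases h2 : (x:ℕ) = (j:ℕ)
          · rw [if_neg (by omega), zero_mul]
          · rw [if_neg h2, mul_zero]
        simp only [h]
        simp
      rw [hsum, mul_zero]
  · by_cases hj : (j:ℕ) < k
    · have hij : i ≠ j := by
        intro h; rw [h] at hi; exact hi hj
      rw [if_neg (by tauto), if_neg hij]
      have hsum : redExp k (fun x => redExpert k i x * redExpert k j x) = 0 := by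
        unfold redExp redExpert
        simp only [hi, hj, if_true, if_false]
        have h : ∀ x : Fin (2*k-1), (if (x:ℕ) = (i:ℕ) then (1:ℝ) else 0) *
            (if (x:ℕ) < k then (1:ℝ) else 0) = 0 := fun x => by
          by_cases h2 : (x:ℕ) = (i:ℕ)
          · rw [if_neg (show ¬ (x:ℕ) < k by omega), mul_zero]
          · rw [if_neg h2, zero_mul]
        simp only [h]
        simp
      rw [hsum, mul_zero]
    · rw [if_neg (by tauto)]
      by_cases hij : i = j
      · subst hij
        rw [if_pos rfl]
        rw [redImp_ge hk hi, Real.mul_self_sqrt hbpos.le]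
        have hsum : redExp k (fun x => redExpert k i x * redExpert k i x)
            = (1:ℝ)/(2*(k:ℝ)-1) := by
          unfold redExp redExpert
          simp only [hi, if_false]
          rw [castN hk]
          have h : ∀ x : Fin (2*k-1), (if (x:ℕ) = (i:ℕ) then (1:ℝ) else 0) *
              (if (x:ℕ) = (i:ℕ) then (1:ℝ) else 0) = if (x:ℕ) = (i:ℕ) then 1 else 0 :=
            fun x => by split <;> norm_num
          simp only [h]
          rw [sum_ind_eq i]
        rw [hsum, redBeta, rpow32 hbpos]
      · rw [if_neg hij]
        have hsum : redExp k (fun x => redExpert k i x * redExpert k j x) = 0 := by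
          unfold redExp redExpert
          simp only [hi, hj, if_false]
          have h : ∀ x : Fin (2*k-1), (if (x:ℕ) = (i:ℕ) then (1:ℝ) else 0) *
              (if (x:ℕ) = (j:ℕ) then (1:ℝ) else 0) = 0 := fun x => by
            by_cases h2 : (x:ℕ) = (i:ℕ)
            · have hne : (i:ℕ) ≠ (j:ℕ) := fun hh => hij (Fin.val_injective hh)
              rw [if_neg (show ¬ (x:ℕ) = (j:ℕ) by omega), mul_zero]
            · rw [if_neg h2, zero_mul]
          simp only [h]
          simp
        rw [hsum, mul_zero]

lemma alpha_pos (hk : 2 ≤ k) : 0 < redAlpha k := by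
  have hNpos := Npos hk
  have hkR : (0:ℝ) < (k:ℝ) := by exact_mod_cast (by omega : 0 < k)
  exact Real.rpow_pos_of_pos (by positivity) _

lemma beta_pos (hk : 2 ≤ k) : 0 < redBeta k := by
  have hNpos := Npos hk
  exact Real.rpow_pos_of_pos (by positivity) _
end facts

lemma det_formula {k : ℕ} (hk : 2 ≤ k) (S : Finset (Fin (2 * k - 1))) (hS : S.card = k)
    (t : ℕ) (ht1 : 1 ≤ t) (htk : t ≤ k)
    (htS : (S.filter fun e : Fin (2 * k - 1) => (e : ℕ) < k).card = t) :
    (subK (redKer k) S + redBeta k • 1).det = redD k t := by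
  have hβ := beta_pos hk
  have hα := alpha_pos hk
  set d : {x // x ∈ S} → ℝ := fun i => if (i.1 : ℕ) < k then redBeta k else 2 * redBeta k with hd_def
  set u : {x // x ∈ S} → ℝ := fun i => if (i.1 : ℕ) < k then Real.sqrt (redAlpha k) else 0 with hu_def
  have hmat : subK (redKer k) S + redBeta k • 1 = Matrix.diagonal d + Matrix.replicateCol Unit u * Matrix.replicateRow Unit u := by
    ext i j
    have hcr : (Matrix.replicateCol Unit u * Matrix.replicateRow Unit u) i j = u i * u j := by
      simp [Matrix.mul_apply]
    simp only [Matrix.add_apply, hcr, subK, Matrix.submatrix_apply, Matrix.smul_apply,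
      Matrix.one_apply, Matrix.diagonal, Matrix.of_apply]
    rw [redKer_apply hk]
    have hij : (i = j) ↔ (i.1 = j.1) := Subtype.ext_iff
    by_cases h1 : (i.1 : ℕ) < k <;> by_cases h2 : (j.1 : ℕ) < k <;>
      by_cases h3 : i = j <;>
      simp only [h1, h2, h3, if_true, if_false, and_self, true_and, false_and, and_false,
        if_neg, hij.symm, d, u, smul_eq_mul]
    · rw [Real.mul_self_sqrt hα.le]; ring
    · rw [Real.mul_self_sqrt hα.le]; ring
    · exact absurd (hij.mp h3) (by omega)
    · ring
    · exact absurd (hij.mp h3) (by omega)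
    · ring
    · ring
    · ring
  rw [hmat, det_diag_add_cmr d u (fun i => by
    by_cases h : (i.1 : ℕ) < k <;> simp [d, h] <;> positivity)]
  have hcardneg : (S.filter fun e : Fin (2 * k - 1) => ¬ (e : ℕ) < k).card = k - t := by
    have := Finset.card_filter_add_card_filter_not
      (s := S) (p := fun e : Fin (2 * k - 1) => (e : ℕ) < k)
    omega
  have hprod : (∏ i, d i) = redBeta k ^ t * (2 * redBeta k) ^ (k - t) := by
    have : (∏ i : {x // x ∈ S}, d i)
        = ∏ x ∈ S, (if (x : ℕ) < k then redBeta k else 2 * redBeta k) :=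
      Finset.prod_coe_sort S (fun x => if (x : ℕ) < k then redBeta k else 2 * redBeta k)
    rw [this, Finset.prod_ite, Finset.prod_const, Finset.prod_const, htS, hcardneg]
  have hsum : (∑ i, u i ^ 2 / d i) = (t : ℝ) * (redAlpha k / redBeta k) := by
    have e0 : (∑ i : {x // x ∈ S}, u i ^ 2 / d i)
        = ∑ x ∈ S, (if (x : ℕ) < k then redAlpha k / redBeta k else 0) := by
      rw [← Finset.sum_coe_sort S (fun x => if (x : ℕ) < k then redAlpha k / redBeta k else 0)]
      refine Finset.sum_congr rfl fun i _ => ?_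
      by_cases h : (i.1 : ℕ) < k <;>
        simp [d, u, h, Real.sq_sqrt hα.le]
    rw [e0, Finset.sum_ite, Finset.sum_const, Finset.sum_const, htS]
    simp [nsmul_eq_mul]
  rw [hprod, hsum]
  have e1 : redBeta k ^ t * redBeta k ^ (k - t) = redBeta k ^ (k - 1) * redBeta k := by
    rw [← pow_add, ← pow_succ]; congr 1; omega
  have e2 : (1 + (t : ℝ) * (redAlpha k / redBeta k))
      = (redBeta k + (t : ℝ) * redAlpha k) / redBeta k := by
    field_simp
  rw [mul_pow, e2]
  have e3 : redBeta k ^ t * ((2:ℝ) ^ (k - t) * redBeta k ^ (k - t)) *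
        ((redBeta k + (t:ℝ) * redAlpha k) / redBeta k)
      = (redBeta k ^ t * redBeta k ^ (k - t) / redBeta k) *
        ((2:ℝ) ^ (k - t) * (redBeta k + (t:ℝ) * redAlpha k)) := by
    ring
  rw [e3, e1, mul_div_assoc, div_self hβ.ne', mul_one]
  unfold redD
  ring

lemma redD_pos {k : ℕ} (hk : 2 ≤ k) (t : ℕ) : 0 < redD k t := by
  have hβ := beta_pos hk
  have hα := alpha_pos hk
  unfold redD
  have : (0:ℝ) ≤ (t:ℝ) := Nat.cast_nonneg t
  positivity

lemma redD_strict {k : ℕ} (hk : 2 ≤ k) (t : ℕ) (ht1 : 1 ≤ t) (htk : t < k) :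
    redD k (t + 1) < redD k t := by
  have hβ := beta_pos hk
  have hα := alpha_pos hk
  have ht1R : (1:ℝ) ≤ (t:ℝ) := by exact_mod_cast ht1
  have h2 : (2:ℝ) ^ (k - t) = 2 * 2 ^ (k - (t + 1)) := by
    rw [← pow_succ']; congr 1; omega
  have hm1 : redD k (t + 1)
      = (redBeta k ^ (k - 1) * 2 ^ (k - (t + 1))) * (redBeta k + ((t:ℝ) + 1) * redAlpha k) := by
    unfold redD; push_cast; ring
  have hm2 : redD k t
      = (redBeta k ^ (k - 1) * 2 ^ (k - (t + 1))) * (2 * (redBeta k + (t:ℝ) * redAlpha k)) := by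
    unfold redD; rw [h2]; ring
  rw [hm1, hm2]
  have hpos : (0:ℝ) < redBeta k ^ (k - 1) * 2 ^ (k - (t + 1)) := by positivity
  apply mul_lt_mul_of_pos_left _ hpos
  nlinarith

lemma card_filter_lt_univ {k : ℕ} (hk : 2 ≤ k) :
    ((univ : Finset (Fin (2 * k - 1))).filter fun x : Fin (2 * k - 1) => (x : ℕ) < k).card = k := by
  have h := sum_ind_lt hk
  rw [Finset.sum_boole] at h
  exact_mod_cast h

lemma part3 {k : ℕ} (hk : 2 ≤ k) (S : Finset (Fin (2 * k - 1))) (hS : S.card = k)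
    (hmax : ∀ T : Finset (Fin (2 * k - 1)), T.card = k →
      Real.log (subK (redKer k) T + redBeta k • 1).det ≤
        Real.log (subK (redKer k) S + redBeta k • 1).det) :
    (S.filter fun e : Fin (2 * k - 1) => (e : ℕ) < k).card = 1 ∧
      ∀ e : Fin (2 * k - 1), k ≤ (e : ℕ) → e ∈ S := by
  have hcard_univ : (univ : Finset (Fin (2 * k - 1))).card = 2 * k - 1 := by
    simp
  have hcard_lt := card_filter_lt_univ hk
  have hcard_ge : ((univ : Finset (Fin (2 * k - 1))).filter fun x : Fin (2 * k - 1) => ¬ (x : ℕ) < k).card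
      = k - 1 := by
    have := Finset.card_filter_add_card_filter_not
      (s := (univ : Finset (Fin (2 * k - 1)))) (p := fun x : Fin (2 * k - 1) => (x : ℕ) < k)
    omega
  -- the candidate subset T₁
  set z : Fin (2 * k - 1) := ⟨0, by omega⟩ with hz
  set T₁ : Finset (Fin (2 * k - 1)) :=
    insert z ((univ : Finset (Fin (2 * k - 1))).filter fun x : Fin (2 * k - 1) => ¬ (x : ℕ) < k) with hT₁
  have hzT : z ∉ (univ : Finset (Fin (2 * k - 1))).filter fun x : Fin (2 * k - 1) => ¬ (x : ℕ) < k := by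
    simp [hz]; omega
  have hT₁card : T₁.card = k := by
    rw [hT₁, Finset.card_insert_of_notMem hzT, hcard_ge]; omega
  have hT₁filter : (T₁.filter fun e : Fin (2 * k - 1) => (e : ℕ) < k).card = 1 := by
    rw [hT₁, Finset.filter_insert, if_pos (by simp [hz]; omega), Finset.filter_filter]
    have : ((univ : Finset (Fin (2 * k - 1))).filter
        fun x : Fin (2 * k - 1) => ¬ (x : ℕ) < k ∧ (x : ℕ) < k) = ∅ := by
      apply Finset.filter_eq_empty_iff.mpr; intro x _; tauto
    rw [this]
    simp
  -- t for S
  set t := (S.filter fun e : Fin (2 * k - 1) => (e : ℕ) < k).card with ht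
  have htk : t ≤ k := by
    have := Finset.card_filter_le S (fun e : Fin (2 * k - 1) => (e : ℕ) < k)
    omega
  have ht1 : 1 ≤ t := by
    by_contra h
    have h0 : (S.filter fun e : Fin (2 * k - 1) => (e : ℕ) < k) = ∅ := by
      rw [← Finset.card_eq_zero]; omega
    have hsub : S ⊆ (univ : Finset (Fin (2 * k - 1))).filter fun x : Fin (2 * k - 1) => ¬ (x : ℕ) < k := by
      intro e he
      simp only [Finset.mem_filter, Finset.mem_univ, true_and]
      intro hlt
      have : e ∈ (S.filter fun e : Fin (2 * k - 1) => (e : ℕ) < k) :=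
        Finset.mem_filter.mpr ⟨he, hlt⟩
      rw [h0] at this
      exact absurd this (Finset.notMem_empty e)
    have := Finset.card_le_card hsub
    omega
  have hdetS := det_formula hk S hS t ht1 htk rfl
  have hdetT := det_formula hk T₁ hT₁card 1 le_rfl (by omega) hT₁filter
  -- strict decrease chain
  have key : ∀ s : ℕ, 2 ≤ s → s ≤ k → redD k s < redD k 1 := by
    intro s
    induction s with
    | zero => intro h; omega
    | succ n ih =>
      intro h1 h2
      rcases Nat.lt_or_ge n 2 with h | h
      · have hn : n = 1 := by omega
        subst hn
        exact redD_strict hk 1 le_rfl (by omega)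
      · exact lt_trans (redD_strict hk n (by omega) (by omega)) (ih (by omega) (by omega))
  have hDle : redD k 1 ≤ redD k t := by
    have hlog := hmax T₁ hT₁card
    rw [hdetS, hdetT] at hlog
    exact (Real.log_le_log_iff (redD_pos hk 1) (redD_pos hk t)).mp hlog
  have ht_eq : t = 1 := by
    by_contra h
    have : 2 ≤ t := by omega
    exact absurd hDle (not_le.mpr (key t this htk))
  refine ⟨ht_eq, ?_⟩
  have hScard : (S.filter fun e : Fin (2 * k - 1) => ¬ (e : ℕ) < k).card = k - 1 := by
    have := Finset.card_filter_add_card_filter_not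
      (s := S) (p := fun e : Fin (2 * k - 1) => (e : ℕ) < k)
    omega
  have hsub : (S.filter fun e : Fin (2 * k - 1) => ¬ (e : ℕ) < k)
      ⊆ (univ : Finset (Fin (2 * k - 1))).filter fun x : Fin (2 * k - 1) => ¬ (x : ℕ) < k :=
    Finset.filter_subset_filter _ (Finset.subset_univ S)
  have heq := Finset.eq_of_subset_of_card_le hsub (by omega)
  intro e he
  have : e ∈ (univ : Finset (Fin (2 * k - 1))).filter fun x : Fin (2 * k - 1) => ¬ (x : ℕ) < k := by
    simp only [Finset.mem_filter, Finset.mem_univ, true_and]; omega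
  rw [← heq] at this
  exact (Finset.mem_filter.mp this).1

/-- In the redundancy construction with `λ = β`:
(1) for any size-`K` subset `S` containing exactly `t` experts from the identical block
(`1 ≤ t ≤ K`), `det(𝒦_S + λI) = D(t) = β^{K−1}·2^{K−t}·(β + tα)`;
(2) `D(t)` is strictly decreasing in `t` on `{1,…,K}`;
(3) consequently every size-`K` maximizer of `log det(𝒦_S + λI)` contains exactly one
expert from the identical block together with all `K − 1` specialists. -/
theorem red_construction_det (k : ℕ) (hk : 2 ≤ k) :
    (∀ S : Finset (Fin (2 * k - 1)), S.card = k →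
        ∀ t : ℕ, 1 ≤ t → t ≤ k → (S.filter fun e : Fin (2 * k - 1) => (e : ℕ) < k).card = t →
          (subK (redKer k) S + redBeta k • 1).det = redD k t) ∧
      (∀ t : ℕ, 1 ≤ t → t < k → redD k (t + 1) < redD k t) ∧
      (∀ S : Finset (Fin (2 * k - 1)), S.card = k →
        (∀ T : Finset (Fin (2 * k - 1)), T.card = k →
          Real.log (subK (redKer k) T + redBeta k • 1).det ≤
            Real.log (subK (redKer k) S + redBeta k • 1).det) →
        (S.filter fun e : Fin (2 * k - 1) => (e : ℕ) < k).card = 1 ∧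
          ∀ e : Fin (2 * k - 1), k ≤ (e : ℕ) → e ∈ S) := by
  refine ⟨fun S hS t ht1 htk htS => det_formula hk S hS t ht1 htk htS,
    fun t ht1 htk => redD_strict hk t ht1 htk,
    fun S hS hmax => part3 hk S hS hmax⟩
end
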